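/- Let b, c be integers with 3 ≤ b ≤ c and set n = b + c + 2. Let Φ be the (n+1)×(n+1) integer matrix in block form with row/column blocks of sizes 1, 1, b, c, 1 defined as follows: the (1,1) entry is 0; the rest of the first row is (−(v_1 − ε_1^{(1)}), −(v_b − ε_b^{(b)}), −(v_c − ε_c^{(c)}), −1) = (0, −(v_b − ε_b^{(b)}), −(v_c − ε_c^{(c)}), −1); the rest of the first column is ((ε_1^{(1)})ᵀ, (ε_1^{(b)})ᵀ, (ε_1^{(c)})ᵀ, −2); and the remaining (b+c+2)×(b+c+2) block is φ = [[J_1, K_{1,b}, K_{1,c}, K_{1,1}], [K_{b,1}, J_b, K_{b,c}, K_{b,1}], [K_{c,1}, K_{c,b}, J_c, K_{c,1}], [−K_{1,1}, −K_{1,b}, −K_{1,c}, −1]]. Write the characteristic polynomial det(x·I − Φ) = Σ_{i=0}^{n+1} λ_i x^i. Then λ_{n−r} = 0 for all 1 ≤ r ≤ b−1, and λ_{n−b} = −1 − δ_{bc} < 0, where δ_{bc} = 1 if b = c and δ_{bc} = 0 otherwise. -/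

import Mathlib

open Matrix Finset

/-- `J_p`: the `p × p` matrix with 1's in positions `(i+1, i)` and 0 elsewhere
(0-indexed: entry `(i, j)` is 1 iff `i = j + 1`). -/
def Jmat (p : ℕ) : Matrix (Fin p) (Fin p) ℤ :=
  Matrix.of fun i j => if (i : ℕ) = (j : ℕ) + 1 then 1 else 0

/-- `K_{p,q}`: the `p × q` matrix whose first row consists of 1's, other entries 0. -/
def Kmat (p q : ℕ) : Matrix (Fin p) (Fin q) ℤ :=
  Matrix.of fun i _ => if (i : ℕ) = 0 then 1 else 0

/-- The Coxeter matrix of (the path algebra of) the star tree `T_{a,b,c}`, in block form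
with row/column blocks of sizes `a, b, c, 1`:
`φ = [[J_a, K_{a,b}, K_{a,c}, K_{a,1}], [K_{b,a}, J_b, K_{b,c}, K_{b,1}],
[K_{c,a}, K_{c,b}, J_c, K_{c,1}], [−K_{1,a}, −K_{1,b}, −K_{1,c}, −1]]`. -/
def starCoxeter (a b c : ℕ) :
    Matrix ((Fin a ⊕ Fin b) ⊕ (Fin c ⊕ Fin 1)) ((Fin a ⊕ Fin b) ⊕ (Fin c ⊕ Fin 1)) ℤ :=
  Matrix.fromBlocks
    (Matrix.fromBlocks (Jmat a) (Kmat a b) (Kmat b a) (Jmat b))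
    (Matrix.fromBlocks (Kmat a c) (Kmat a 1) (Kmat b c) (Kmat b 1))
    (Matrix.fromBlocks (Kmat c a) (Kmat c b) (-(Kmat 1 a)) (-(Kmat 1 b)))
    (Matrix.fromBlocks (Jmat c) (Kmat c 1) (-(Kmat 1 c)) (-1))

/-- The Coxeter matrix `Φ` of the canonical algebra `C_{a,b,c}`, in block form
with row/column blocks of sizes `1, a, b, c, 1`: the `(1,1)` entry is `0`; the rest of
the first row is `(−(v_a − ε_a^{(a)}), −(v_b − ε_b^{(b)}), −(v_c − ε_c^{(c)}), −1)`;
the rest of the first column is `((ε_1^{(a)})ᵀ, (ε_1^{(b)})ᵀ, (ε_1^{(c)})ᵀ, −2)`; and the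
remaining `(a+b+c+1) × (a+b+c+1)` block is the Coxeter matrix of the star tree
`T_{a,b,c}`. (0-indexed: `ε_p^{(p)}` has its 1 at index `p − 1`, `ε_1^{(p)}` at index 0.) -/
def canonicalCoxeter (a b c : ℕ) :
    Matrix (Fin 1 ⊕ ((Fin a ⊕ Fin b) ⊕ (Fin c ⊕ Fin 1)))
      (Fin 1 ⊕ ((Fin a ⊕ Fin b) ⊕ (Fin c ⊕ Fin 1))) ℤ :=
  Matrix.fromBlocks
    (0 : Matrix (Fin 1) (Fin 1) ℤ)
    (Matrix.of fun _ j =>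
      Sum.elim
        (Sum.elim (fun i : Fin a => (if (i : ℕ) = a - 1 then 1 else 0) - 1)
          (fun i : Fin b => (if (i : ℕ) = b - 1 then 1 else 0) - 1))
        (Sum.elim (fun i : Fin c => (if (i : ℕ) = c - 1 then 1 else 0) - 1)
          (fun _ : Fin 1 => -1)) j)
    (Matrix.of fun i _ =>
      Sum.elim
        (Sum.elim (fun i : Fin a => if (i : ℕ) = 0 then 1 else 0)
          (fun i : Fin b => if (i : ℕ) = 0 then 1 else 0))
        (Sum.elim (fun i : Fin c => if (i : ℕ) = 0 then 1 else 0)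
          (fun _ : Fin 1 => -2)) i)
    (starCoxeter a b c)


open Polynomial

noncomputable section CoxAux

abbrev Fz : Type := FractionRing (Polynomial ℤ)
def fz : Polynomial ℤ →+* Fz := algebraMap _ _
def xz : Fz := fz X
lemma fz_inj : Function.Injective fz := IsFractionRing.injective (Polynomial ℤ) Fz
lemma fz_ne_zero {p : Polynomial ℤ} (h : p ≠ 0) : fz p ≠ 0 := by
  rw [show (0:Fz) = fz 0 from (map_zero fz).symm]
  exact fun hh => h (fz_inj hh)
lemma xz_ne_zero : xz ≠ 0 := fz_ne_zero X_ne_zero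
lemma xz_sub_one_ne_zero : xz - 1 ≠ 0 := by
  have h1 : xz - 1 = fz (X - 1) := by rw [map_sub, _root_.map_one]; rfl
  rw [h1]
  apply fz_ne_zero
  have h2 : (X - 1 : Polynomial ℤ) = X - C 1 := by simp
  rw [h2]
  exact X_sub_C_ne_zero 1

def eqv (β γ : ℕ) : (Fin 5 ⊕ (Fin β ⊕ Fin γ)) ≃
    (Fin 1 ⊕ ((Fin 1 ⊕ Fin (β+1)) ⊕ (Fin (γ+1) ⊕ Fin 1))) where
  toFun := Sum.elim
    (![Sum.inl 0, Sum.inr (Sum.inl (Sum.inl 0)), Sum.inr (Sum.inl (Sum.inr 0)),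
       Sum.inr (Sum.inr (Sum.inl 0)), Sum.inr (Sum.inr (Sum.inr 0))])
    (Sum.elim (fun i => Sum.inr (Sum.inl (Sum.inr i.succ)))
      (fun j => Sum.inr (Sum.inr (Sum.inl j.succ))))
  invFun := Sum.elim (fun _ => Sum.inl 0)
    (Sum.elim
      (Sum.elim (fun _ => Sum.inl 1)
        (fun k => Fin.cases (Sum.inl 2) (fun i => Sum.inr (Sum.inl i)) k))
      (Sum.elim (fun k => Fin.cases (Sum.inl 3) (fun j => Sum.inr (Sum.inr j)) k)
        (fun _ => Sum.inl 4)))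
  left_inv := by
    rintro (p | (i | j))
    · fin_cases p <;> simp
    · simp
    · simp
  right_inv := by
    rintro (e | ((a | k) | (k | t)))
    · simp [Fin.fin_one_eq_zero e]
    · simp [Fin.fin_one_eq_zero a]
    · induction k using Fin.cases <;> simp
    · induction k using Fin.cases <;> simp
    · simp [Fin.fin_one_eq_zero t]

def Amat : Matrix (Fin 5) (Fin 5) Fz :=
  !![xz, 0, 1, 1, 1;
     -1, xz, -1, -1, -1;
     -1, -1, xz, -1, -1;
     -1, -1, -1, xz, -1;
     2, 1, 1, 1, xz+1]

def Bmat (β γ : ℕ) : Matrix (Fin 5) (Fin β ⊕ Fin γ) Fz :=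
  Matrix.of fun p q => Sum.elim
    (fun i : Fin β => ![1 - (if (i:ℕ) = β - 1 then 1 else 0), -1, 0, -1, 1] p)
    (fun j : Fin γ => ![1 - (if (j:ℕ) = γ - 1 then 1 else 0), -1, -1, 0, 1] p) q

def Cmat (β γ : ℕ) : Matrix (Fin β ⊕ Fin γ) (Fin 5) Fz :=
  Matrix.of fun q p => Sum.elim
    (fun i : Fin β => if (i:ℕ) = 0 then ![0,0,-1,0,0] p else 0)
    (fun j : Fin γ => if (j:ℕ) = 0 then ![0,0,0,-1,0] p else 0) q

def Lmat (m : ℕ) : Matrix (Fin m) (Fin m) Fz :=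
  Matrix.of fun i j => if (i:ℕ) = (j:ℕ) then xz else if (i:ℕ) = (j:ℕ)+1 then -1 else 0

def Dmat (β γ : ℕ) : Matrix (Fin β ⊕ Fin γ) (Fin β ⊕ Fin γ) Fz :=
  Matrix.fromBlocks (Lmat β) 0 0 (Lmat γ)

lemma N_apply (b c : ℕ) (i j) :
    ((charmatrix (canonicalCoxeter 1 b c)).map fz) i j
      = (if i = j then xz else 0) - ((canonicalCoxeter 1 b c i j : ℤ) : Fz) := by
  rw [Matrix.map_apply, charmatrix_apply, map_sub]
  congr 1
  · rw [Matrix.diagonal_apply, apply_ite fz, map_zero]; rfl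
  · exact (eq_intCast (fz.comp C) _)

set_option maxHeartbeats 4000000 in
lemma submatrix_eq (β γ : ℕ) (hβ : 1 ≤ β) (hγ : 1 ≤ γ) :
    ((charmatrix (canonicalCoxeter 1 (β+1) (γ+1))).map fz).submatrix (eqv β γ) (eqv β γ)
      = Matrix.fromBlocks Amat (Bmat β γ) (Cmat β γ) (Dmat β γ) := by
  ext i j
  rw [Matrix.submatrix_apply, N_apply]
  rcases i with p | (i | i) <;> rcases j with q | (j | j)
  · fin_cases p <;> fin_cases q <;>
      simp [eqv, canonicalCoxeter, starCoxeter, Jmat, Kmat, Amat, xz] <;>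
      (try rw [if_neg (by omega)]) <;> (try norm_num) <;> omega
  · fin_cases p <;>
      simp [eqv, canonicalCoxeter, starCoxeter, Jmat, Kmat, Bmat, (Fin.succ_ne_zero _).symm] <;>
      split_ifs <;> (try norm_num) <;> omega
  · fin_cases p <;>
      simp [eqv, canonicalCoxeter, starCoxeter, Jmat, Kmat, Bmat, (Fin.succ_ne_zero _).symm] <;>
      split_ifs <;> (try norm_num) <;> omega
  · fin_cases q <;>
      simp [eqv, canonicalCoxeter, starCoxeter, Jmat, Kmat, Cmat] <;>
      split_ifs <;> (try norm_num) <;> omega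
  · simp [eqv, canonicalCoxeter, starCoxeter, Jmat, Kmat, Dmat, Lmat]
    split_ifs <;> (try norm_num) <;> omega
  · simp [eqv, canonicalCoxeter, starCoxeter, Jmat, Kmat, Dmat, Lmat]
  · fin_cases q <;>
      simp [eqv, canonicalCoxeter, starCoxeter, Jmat, Kmat, Cmat] <;>
      split_ifs <;> (try norm_num) <;> omega
  · simp [eqv, canonicalCoxeter, starCoxeter, Jmat, Kmat, Dmat, Lmat]
  · simp [eqv, canonicalCoxeter, starCoxeter, Jmat, Kmat, Dmat, Lmat]
    split_ifs <;> (try norm_num) <;> omega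

lemma detL (m : ℕ) : (Lmat m).det = xz^m := by
  rw [Matrix.det_of_lowerTriangular (Lmat m)
    (by intro i j hij
        have h2 : (i:ℕ) < (j:ℕ) := hij
        simp only [Lmat, Matrix.of_apply]
        rw [if_neg (by omega), if_neg (by omega)])]
  simp [Lmat, Finset.prod_const, Finset.card_univ]

def hsum (m : ℕ) : Fz := ∑ i : Fin m, xz⁻¹^((i:ℕ)+1)

lemma hsum_rel (m : ℕ) : hsum m * (xz - 1) = 1 - xz⁻¹^m := by
  induction m with
  | zero => simp [hsum]
  | succ k ih =>
    have hx : xz⁻¹ * xz = 1 := inv_mul_cancel₀ xz_ne_zero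
    have : hsum (k+1) = hsum k + xz⁻¹^(k+1) := by
      rw [hsum, hsum, Fin.sum_univ_castSucc]; simp
    rw [this, add_mul, ih]
    have h2 : xz⁻¹^(k+1) * xz = xz⁻¹^k := by
      rw [pow_succ, mul_assoc, hx, mul_one]
    linear_combination h2

def Wmat (β γ : ℕ) : Matrix (Fin β ⊕ Fin γ) (Fin 5) Fz :=
  Matrix.of fun q p => Sum.elim
    (fun i : Fin β => if p = 2 then xz⁻¹^((i:ℕ)+1) else 0)
    (fun j : Fin γ => if p = 3 then xz⁻¹^((j:ℕ)+1) else 0) q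

def Smat (β γ : ℕ) : Matrix (Fin 5) (Fin 5) Fz :=
  !![xz, 0, 1 + hsum β - xz⁻¹^β, 1 + hsum γ - xz⁻¹^γ, 1;
     -1, xz, -1 - hsum β, -1 - hsum γ, -1;
     -1, -1, xz, -1 - hsum γ, -1;
     -1, -1, -1 - hsum β, xz, -1;
     2, 1, 1 + hsum β, 1 + hsum γ, xz+1]

/-- the column of `L⁻¹`-weights kills the subdiagonal matrix. -/
lemma sum_L (m : ℕ) (i : Fin m) :
    ∑ k : Fin m, Lmat m i k * xz⁻¹^((k:ℕ)+1)
      = if (i:ℕ) = 0 then 1 else 0 := by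
  have hx : xz * xz⁻¹ = 1 := mul_inv_cancel₀ xz_ne_zero
  have key : ∀ k : Fin m, Lmat m i k * xz⁻¹^((k:ℕ)+1)
      = (if i = k then xz * xz⁻¹^((i:ℕ)+1) else 0)
        + (if (i:ℕ) = (k:ℕ)+1 then -xz⁻¹^((k:ℕ)+1) else 0) := by
    intro k
    simp only [Lmat, Matrix.of_apply, Fin.ext_iff]
    by_cases h1 : (i:ℕ) = (k:ℕ)
    · rw [if_pos h1, if_pos h1, if_neg (by omega), h1, add_zero]
    · rw [if_neg h1, if_neg h1, zero_add]
      by_cases h2 : (i:ℕ) = (k:ℕ) + 1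
      · rw [if_pos h2, if_pos h2]; ring
      · rw [if_neg h2, if_neg h2, zero_mul]
  rw [Finset.sum_congr rfl (fun k _ => key k), Finset.sum_add_distrib]
  rw [Finset.sum_ite_eq univ i (fun k => xz * xz⁻¹^((i:ℕ)+1))]
  simp only [Finset.mem_univ, if_true]
  by_cases hi : (i:ℕ) = 0
  · rw [hi, Finset.sum_eq_zero (fun k _ => by rw [if_neg (by omega)])]
    rw [pow_one]
    simp [hx]
  · have hlt : (i:ℕ) - 1 < m := by omega
    have hj : ((⟨(i:ℕ)-1, hlt⟩ : Fin m) : ℕ) = (i:ℕ)-1 := rfl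
    rw [Finset.sum_eq_single (⟨(i:ℕ)-1, hlt⟩ : Fin m)
      (fun k _ hk => by
        rw [if_neg (fun hc => hk (Fin.ext (by rw [hj]; omega)))])
      (fun h => absurd (Finset.mem_univ _) h)]
    rw [if_pos (by rw [hj]; omega), if_neg hi, hj]
    rw [show (i:ℕ) - 1 + 1 = (i:ℕ) from by omega, pow_succ]
    linear_combination xz⁻¹^((i:ℕ)) * hx

lemma sum_ind (m : ℕ) (hm : 1 ≤ m) :
    ∑ i : Fin m, (if (i:ℕ) = m-1 then (1:Fz) else 0) * xz⁻¹^((i:ℕ)+1) = xz⁻¹^m := by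
  have hlt : m - 1 < m := by omega
  have hj : ((⟨m-1, hlt⟩ : Fin m) : ℕ) = m-1 := rfl
  rw [Finset.sum_eq_single (⟨m-1, hlt⟩ : Fin m)
    (fun k _ hk => by
      rw [if_neg (fun hc => hk (Fin.ext (by rw [hj]; omega))), zero_mul])
    (fun h => absurd (Finset.mem_univ _) h)]
  rw [if_pos (by rw [hj]), hj, one_mul, show m - 1 + 1 = m from by omega]

lemma sum_L' (m : ℕ) (i : Fin m) :
    ∑ k : Fin m, Lmat m i k * (xz^((k:ℕ)+1))⁻¹ = if (i:ℕ) = 0 then 1 else 0 := by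
  simp only [← inv_pow]; exact sum_L m i

lemma sum_ind' (m : ℕ) (hm : 1 ≤ m) :
    ∑ i : Fin m, (if (i:ℕ) = m-1 then (xz^((i:ℕ)+1))⁻¹ else 0) = (xz^m)⁻¹ := by
  have h := sum_ind m hm
  simp only [ite_mul, one_mul, zero_mul, inv_pow] at h
  exact h

lemma CDW (β γ : ℕ) : Cmat β γ + Dmat β γ * Wmat β γ = 0 := by
  ext q p
  rcases q with i | j <;>
    fin_cases p <;>
      simp [Cmat, Dmat, Wmat, Matrix.mul_apply, Fintype.sum_sum_type, mul_ite, mul_zero] <;>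
      rw [sum_L'] <;> split_ifs <;> norm_num

set_option maxHeartbeats 2000000 in
lemma ABW (β γ : ℕ) (hβ : 1 ≤ β) (hγ : 1 ≤ γ) :
    Amat + Bmat β γ * Wmat β γ = Smat β γ := by
  ext p p'
  fin_cases p <;> fin_cases p' <;>
    simp [Amat, Bmat, Wmat, Smat, Matrix.mul_apply, Fintype.sum_sum_type, mul_ite, mul_zero,
      sub_mul, one_mul, neg_mul, Finset.sum_sub_distrib, Finset.sum_neg_distrib, hsum] <;>
    (try rw [sum_ind' _ (by omega)]) <;> ring

set_option maxHeartbeats 4000000 in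
lemma detS (β γ : ℕ) :
    (Smat β γ).det = (xz+1) * (xz^2 - xz⁻¹^β) * (xz^2 - xz⁻¹^γ) := by
  have hb : xz⁻¹^β = 1 - hsum β * (xz - 1) := by linear_combination hsum_rel β
  have hg : xz⁻¹^γ = 1 - hsum γ * (xz - 1) := by linear_combination hsum_rel γ
  rw [Smat, hb, hg]
  simp only [det_succ_row_zero, Fin.sum_univ_succ, Fin.sum_univ_zero, submatrix_apply,
    Fin.succAbove, Fin.castSucc, Fin.castAdd, Fin.castLE, Fin.lt_def, Fin.succ,
    Matrix.cons_val', Matrix.cons_val_zero, Matrix.cons_val_one, Matrix.head_cons,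
    Matrix.head_fin_const, Matrix.cons_val_fin_one, Matrix.empty_val']
  norm_num [Matrix.det_fin_one]
  ring

lemma detD (β γ : ℕ) : (Dmat β γ).det = xz^β * xz^γ := by
  rw [Dmat, Matrix.det_fromBlocks_zero₂₁, detL, detL]

lemma pow_cancel (m : ℕ) : xz^m * xz⁻¹^m = 1 := by
  rw [← mul_pow, mul_inv_cancel₀ xz_ne_zero, one_pow]


lemma charpoly_canonical (β γ : ℕ) (hβ : 1 ≤ β) (hγ : 1 ≤ γ) :
    (canonicalCoxeter 1 (β+1) (γ+1)).charpoly
      = (Polynomial.X + 1) * (Polynomial.X^(β+2) - 1) * (Polynomial.X^(γ+2) - 1) := by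
  have hinj : Function.Injective fz := IsFractionRing.injective (Polynomial ℤ) _
  apply hinj
  rw [Matrix.charpoly, RingHom.map_det, RingHom.mapMatrix_apply]
  rw [← Matrix.det_submatrix_equiv_self (eqv β γ), submatrix_eq β γ hβ hγ]
  have hV : (Matrix.fromBlocks (1 : Matrix (Fin 5) (Fin 5) Fz) 0 (Wmat β γ) 1).det = 1 := by
    rw [Matrix.det_fromBlocks_zero₁₂, Matrix.det_one, Matrix.det_one, one_mul]
  have hprod : Matrix.fromBlocks Amat (Bmat β γ) (Cmat β γ) (Dmat β γ) *
      Matrix.fromBlocks 1 0 (Wmat β γ) 1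
        = Matrix.fromBlocks (Smat β γ) (Bmat β γ) 0 (Dmat β γ) := by
    rw [Matrix.fromBlocks_multiply]
    simp only [Matrix.mul_one, Matrix.mul_zero,
      zero_add, add_zero]
    rw [ABW β γ hβ hγ, CDW β γ]
  have hdet : (Matrix.fromBlocks Amat (Bmat β γ) (Cmat β γ) (Dmat β γ)).det
      = (Smat β γ).det * (Dmat β γ).det := by
    calc (Matrix.fromBlocks Amat (Bmat β γ) (Cmat β γ) (Dmat β γ)).det
        = (Matrix.fromBlocks Amat (Bmat β γ) (Cmat β γ) (Dmat β γ)).det *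
            (Matrix.fromBlocks (1 : Matrix (Fin 5) (Fin 5) Fz) 0 (Wmat β γ) 1).det := by
          rw [hV, mul_one]
      _ = (Matrix.fromBlocks (Smat β γ) (Bmat β γ) 0 (Dmat β γ)).det := by
          rw [← Matrix.det_mul, hprod]
      _ = (Smat β γ).det * (Dmat β γ).det := Matrix.det_fromBlocks_zero₂₁ _ _ _
  rw [hdet, detS, detD]
  rw [_root_.map_mul, _root_.map_mul, map_add, map_sub, map_sub, map_pow, map_pow, _root_.map_one]
  show (xz+1) * (xz^2 - xz⁻¹^β) * (xz^2 - xz⁻¹^γ) * (xz^β * xz^γ)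
      = (xz+1) * (xz^(β+2) - 1) * (xz^(γ+2) - 1)
  have h1 := pow_cancel β
  have h2 := pow_cancel γ
  rw [pow_add, pow_add]
  linear_combination ((xz+1) * (xz⁻¹^γ * xz^γ - xz^2 * xz^γ)) * h1 +
    ((xz+1) * (1 - xz^2 * xz^β)) * h2

end CoxAux

set_option maxHeartbeats 2000000 in
/-- Coefficients of the Coxeter polynomial of the canonical algebra `C_{1,b,c}`,
`3 ≤ b ≤ c`: with `n = b + c + 2` and `det(x·I − Φ) = Σ_i λ_i x^i`,
`λ_{n−r} = 0` for `1 ≤ r ≤ b − 1`, and `λ_{n−b} = −1 − δ_{bc} < 0`. -/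
theorem coeff_coxeterPolynomial_canonical_one (b c : ℕ) (hb : 3 ≤ b) (hbc : b ≤ c)
    (n : ℕ) (hn : n = b + c + 2) :
    (∀ r : ℕ, 1 ≤ r → r ≤ b - 1 →
      (Matrix.charpoly (canonicalCoxeter 1 b c)).coeff (n - r) = 0) ∧
    (Matrix.charpoly (canonicalCoxeter 1 b c)).coeff (n - b) =
      -1 - (if b = c then 1 else 0) ∧
    (Matrix.charpoly (canonicalCoxeter 1 b c)).coeff (n - b) < 0 := by
  obtain ⟨β, rfl⟩ : ∃ β, b = β + 1 := ⟨b - 1, by omega⟩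
  obtain ⟨γ, rfl⟩ : ∃ γ, c = γ + 1 := ⟨c - 1, by omega⟩
  subst hn
  rw [charpoly_canonical β γ (by omega) (by omega)]
  have hexp : ((Polynomial.X + 1) * (Polynomial.X^(β+2) - 1) * (Polynomial.X^(γ+2) - 1) : Polynomial ℤ)
      = Polynomial.X^(β+γ+5) + Polynomial.X^(β+γ+4) - Polynomial.X^(γ+3) - Polynomial.X^(γ+2)
        - Polynomial.X^(β+3) - Polynomial.X^(β+2) + Polynomial.X^1 + 1 := by
    ring
  rw [hexp]
  have hco : (Polynomial.X^(β+γ+5) + Polynomial.X^(β+γ+4) - Polynomial.X^(γ+3)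
      - Polynomial.X^(γ+2) - Polynomial.X^(β+3) - Polynomial.X^(β+2) + Polynomial.X^1
      + (1 : Polynomial ℤ)).coeff (β + 1 + (γ + 1) + 2 - (β + 1))
        = -1 - (if β + 1 = γ + 1 then 1 else 0) := by
    simp only [Polynomial.coeff_add, Polynomial.coeff_sub, Polynomial.coeff_X_pow,
      Polynomial.coeff_one]
    split_ifs <;> omega
  refine ⟨?_, hco, ?_⟩
  · intro r hr1 hr2
    simp only [Polynomial.coeff_add, Polynomial.coeff_sub, Polynomial.coeff_X_pow,
      Polynomial.coeff_one]
    split_ifs <;> omega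
  · rw [hco]
    split_ifs <;> norm_num
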